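/- Let A₁, ..., Aₘ be real symmetric n×n matrices, and suppose there exists λ ∈ ℝᵐ with λₘ ≠ 0 such that λ₁A₁ + ... + λₘAₘ is positive definite. Let P be any invertible real matrix with Pᵀ(λ₁A₁ + ... + λₘAₘ)P = I. Then A₁, ..., Aₘ are simultaneously diagonalizable via congruence if and only if the matrices PᵀAᵢP, i = 1, ..., m−1, pairwise commute. -/

import Mathlib

open Matrix

lemma diag_mul_comm {n : ℕ} {X Y : Matrix (Fin n) (Fin n) ℝ} (hX : X.IsDiag) (hY : Y.IsDiag) :
    X * Y = Y * X := by
  rw [← hX.diagonal_diag, ← hY.diagonal_diag, diagonal_mul_diagonal, diagonal_mul_diagonal]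
  exact congrArg diagonal (funext fun r => mul_comm _ _)

lemma diag_mul_isDiag {n : ℕ} {X Y : Matrix (Fin n) (Fin n) ℝ} (hX : X.IsDiag) (hY : Y.IsDiag) :
    (X * Y).IsDiag := by
  rw [← hX.diagonal_diag, ← hY.diagonal_diag, diagonal_mul_diagonal]
  exact isDiag_diagonal _

lemma simul_diag {n : ℕ} {ι : Type*} [Fintype ι] [DecidableEq ι]
    (B : ι → Matrix (Fin n) (Fin n) ℝ)
    (hB : ∀ i, (B i).IsHermitian) (hc : ∀ i j, B i * B j = B j * B i) :
    ∃ S : Matrix (Fin n) (Fin n) ℝ, Sᵀ * S = 1 ∧ ∀ i, (Sᵀ * B i * S).IsDiag := by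
  classical
  set T : ι → Module.End ℝ (EuclideanSpace ℝ (Fin n)) := fun i => Matrix.toEuclideanLin (B i)
    with hTdef
  have hsym : ∀ i, (T i).IsSymmetric := fun i => Matrix.isHermitian_iff_isSymmetric.1 (hB i)
  have hTc : Pairwise (Function.onFun Commute T) := by
    intro i j _
    show T i * T j = T j * T i
    refine LinearMap.ext fun x => ?_
    simp only [Module.End.mul_apply, hTdef, Matrix.toEuclideanLin_apply, Equiv.apply_symm_apply]
    rw [Matrix.mulVec_mulVec, hc i j, ← Matrix.mulVec_mulVec]
  -- finite index set of candidate joint eigenvalue functions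
  set K : Set (ι → ℝ) := Set.univ.pi (fun i => Set.range (hB i).eigenvalues) with hK
  have hKfin : K.Finite := Set.Finite.pi (fun i => Set.finite_range _)
  haveI : Fintype K := hKfin.fintype
  set W : K → Submodule ℝ (EuclideanSpace ℝ (Fin n)) := fun χ => ⨅ i, Module.End.eigenspace (T i) (χ.1 i) with hW
  have hOF : OrthogonalFamily ℝ (fun χ : K => (W χ : Submodule ℝ (EuclideanSpace ℝ (Fin n)))) (fun χ => (W χ).subtypeₗᵢ) :=
    (LinearMap.IsSymmetric.orthogonalFamily_iInf_eigenspaces hsym).comp Subtype.val_injective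
  have htop : (⨆ χ : K, W χ) = ⊤ := by
    rw [← LinearMap.IsSymmetric.iSup_iInf_eq_top_of_commute hsym hTc]
    refine le_antisymm (iSup_le fun χ => le_iSup_of_le χ.1 le_rfl) (iSup_le fun χ => ?_)
    by_cases hχ : χ ∈ K
    · exact le_iSup_of_le ⟨χ, hχ⟩ le_rfl
    · obtain ⟨i, -, hi⟩ : ∃ i ∈ Set.univ, χ i ∉ Set.range (hB i).eigenvalues := by
        simpa [hK, Set.mem_pi] using hχ
      have hbot : Module.End.eigenspace (T i) (χ i) = ⊥ := by
        by_contra hne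
        have hev : Module.End.HasEigenvalue (T i) (χ i) := hne
        have hsp : χ i ∈ spectrum ℝ (T i) := hev.mem_spectrum
        rw [hTdef] at hsp
        rw [Matrix.spectrum_toEuclideanLin,
          (hB i).spectrum_real_eq_range_eigenvalues] at hsp
        exact hi hsp
      refine le_trans (le_trans (iInf_le _ i) hbot.le) bot_le
  have hint : DirectSum.IsInternal W := by
    rw [hOF.isInternal_iff, htop, Submodule.top_orthogonal_eq_bot]
  have hfr : Module.finrank ℝ (EuclideanSpace ℝ (Fin n)) = n := finrank_euclideanSpace_fin
  set b := hint.subordinateOrthonormalBasis hfr hOF with hb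
  set χ : Fin n → K := fun a => hint.subordinateOrthonormalBasisIndex hfr a hOF with hχdef
  have hmem : ∀ a, b a ∈ W (χ a) := fun a =>
    hint.subordinateOrthonormalBasis_subordinate hfr a hOF
  have heig : ∀ i a, T i (b a) = ((χ a).1 i) • b a := fun i a =>
    Module.End.mem_eigenspace_iff.mp ((Submodule.mem_iInf _).mp (hmem a) i)
  have hmv : ∀ i a, B i *ᵥ ⇑(b a) = ((χ a).1 i) • ⇑(b a) := by
    intro i a
    simpa [hTdef, Matrix.toEuclideanLin_apply] using congr(⇑$(heig i a))
  have hortho : ∀ k l : Fin n, (∑ r, b k r * b l r) = if k = l then 1 else 0 := by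
    intro k l
    have := orthonormal_iff_ite.mp b.orthonormal k l
    rw [← this, PiLp.inner_apply]
    simp [RCLike.inner_apply, starRingEnd_apply]
    exact Finset.sum_congr rfl fun r _ => mul_comm _ _
  refine ⟨Matrix.of (fun k l => b l k), ?_, ?_⟩
  · ext k l
    simp only [Matrix.mul_apply, Matrix.transpose_apply, Matrix.of_apply]
    rw [hortho k l]
    simp [Matrix.one_apply]
  · intro i k l hkl
    have : (Matrix.of (fun k l => b l k))ᵀ * B i * Matrix.of (fun k l => b l k) =
        (Matrix.of (fun k l => b l k))ᵀ * (B i * Matrix.of (fun k l => b l k)) := by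
      rw [Matrix.mul_assoc]
    rw [this]
    simp only [Matrix.mul_apply, Matrix.transpose_apply, Matrix.of_apply]
    have hcol : ∀ r, (B i * Matrix.of (fun k l => b l k)) r l = (B i *ᵥ ⇑(b l)) r := by
      intro r
      simp [Matrix.mul_apply, Matrix.mulVec, dotProduct]
    calc (∑ r, b k r * (B i * Matrix.of (fun k l => b l k)) r l)
        = ∑ r, b k r * (((χ l).1 i) * b l r) := by
          refine Finset.sum_congr rfl fun r _ => ?_
          rw [hcol r, hmv i l]
          simp
      _ = ((χ l).1 i) * ∑ r, b k r * b l r := by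
          rw [Finset.mul_sum]; refine Finset.sum_congr rfl fun r _ => by ring
      _ = 0 := by rw [hortho k l]; simp [hkl]


theorem stmt_10 (n m : ℕ) (A : Fin (m + 1) → Matrix (Fin n) (Fin n) ℝ)
    (hA : ∀ i, (A i).IsSymm)
    (lam : Fin (m + 1) → ℝ) (hlamm : lam (Fin.last m) ≠ 0)
    (hpd : (∑ i, lam i • A i).PosDef)
    (P : Matrix (Fin n) (Fin n) ℝ) (hP : IsUnit P)
    (hPid : Pᵀ * (∑ i, lam i • A i) * P = 1) :
    (∃ Q : Matrix (Fin n) (Fin n) ℝ, IsUnit Q ∧ ∀ i, (Qᵀ * A i * Q).IsDiag) ↔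
      ∀ i j : Fin (m + 1), i ≠ Fin.last m → j ≠ Fin.last m →
        (Pᵀ * A i * P) * (Pᵀ * A j * P) = (Pᵀ * A j * P) * (Pᵀ * A i * P) := by
  classical
  obtain ⟨iP⟩ := hP.nonempty_invertible
  constructor
  · rintro ⟨Q, hQ, hdiag⟩ i j hi hj
    obtain ⟨iQ⟩ := hQ.nonempty_invertible
    haveI : Invertible Pᵀ := Matrix.invertibleTranspose P
    have hPT : ⅟(Pᵀ) = (⅟P)ᵀ :=
      invOf_eq_right_inv (by rw [← Matrix.transpose_mul, invOf_mul_self, Matrix.transpose_one])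
    set R : Matrix (Fin n) (Fin n) ℝ := ⅟P * Q with hRdef
    haveI : Invertible R := invertibleMul _ _
    haveI : Invertible Rᵀ := Matrix.invertibleTranspose R
    have hconj : ∀ k, Rᵀ * (Pᵀ * A k * P) * R = Qᵀ * A k * Q := by
      intro k
      rw [hRdef, Matrix.transpose_mul, ← hPT]
      simp only [Matrix.mul_assoc, invOf_mul_cancel_left, mul_invOf_cancel_left]
    have hsumA : (∑ i, lam i • A i) = ⅟(Pᵀ) * ⅟P := by
      have h2 : (∑ i, lam i • A i) * P = ⅟(Pᵀ) := by
        have h0 := congrArg (fun X => ⅟(Pᵀ) * X) hPid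
        simpa [Matrix.mul_assoc, invOf_mul_cancel_left, mul_one] using h0
      have h3 := congrArg (fun X => X * ⅟P) h2
      simpa [Matrix.mul_assoc, mul_invOf_self, mul_one] using h3
    set D : Matrix (Fin n) (Fin n) ℝ := Rᵀ * R with hDdef
    haveI : Invertible D := invertibleMul _ _
    have hDsum : D = ∑ i, lam i • (Qᵀ * A i * Q) := by
      have : D = Qᵀ * (∑ i, lam i • A i) * Q := by
        rw [hDdef, hRdef, Matrix.transpose_mul, ← hPT, hsumA]
        simp only [Matrix.mul_assoc]
      rw [this, Finset.mul_sum, Finset.sum_mul]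
      refine Finset.sum_congr rfl fun k _ => ?_
      rw [Matrix.mul_smul, Matrix.smul_mul]
    have hDdiag : D.IsDiag := by
      rw [hDsum]
      intro k l hkl
      rw [Matrix.sum_apply]
      refine Finset.sum_eq_zero fun c _ => ?_
      rw [Matrix.smul_apply, hdiag c hkl, smul_zero]
    have hDinv_diag : (⅟D).IsDiag := by
      have h1 : D = diagonal D.diag := hDdiag.diagonal_diag.symm
      rw [invOf_eq_nonsing_inv, h1, Matrix.inv_diagonal]
      exact isDiag_diagonal _
    have hsand : ∀ k l : Fin (m + 1),
        (Pᵀ * A k * P) * (Pᵀ * A l * P) =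
          ⅟(Rᵀ) * ((Rᵀ * (Pᵀ * A k * P) * R) * ⅟D * (Rᵀ * (Pᵀ * A l * P) * R)) * ⅟R := by
      intro k l
      have hDi : ⅟D = ⅟R * ⅟(Rᵀ) :=
        invOf_eq_right_inv (by
          show (Rᵀ * R) * (⅟R * ⅟(Rᵀ)) = 1
          simp only [Matrix.mul_assoc, mul_invOf_cancel_left, mul_invOf_self])
      rw [hDi]
      simp only [Matrix.mul_assoc, invOf_mul_cancel_left, mul_invOf_cancel_left,
        mul_invOf_self, invOf_mul_self, Matrix.mul_one, Matrix.one_mul]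
    have hmid : (Qᵀ * A i * Q) * ⅟D * (Qᵀ * A j * Q) = (Qᵀ * A j * Q) * ⅟D * (Qᵀ * A i * Q) := by
      have di := hdiag i
      have dj := hdiag j
      calc (Qᵀ * A i * Q) * ⅟D * (Qᵀ * A j * Q)
          = (Qᵀ * A j * Q) * ((Qᵀ * A i * Q) * ⅟D) := by
            rw [diag_mul_comm (diag_mul_isDiag di hDinv_diag) dj]
        _ = (Qᵀ * A j * Q) * (⅟D * (Qᵀ * A i * Q)) := by
            rw [diag_mul_comm di hDinv_diag]
        _ = (Qᵀ * A j * Q) * ⅟D * (Qᵀ * A i * Q) := by simp only [Matrix.mul_assoc]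
    rw [hsand i j, hsand j i, hconj i, hconj j, hmid]
  · intro h
    have hBsum : ∑ i, lam i • (Pᵀ * A i * P) = 1 := by
      rw [← hPid, Finset.mul_sum, Finset.sum_mul]
      refine Finset.sum_congr rfl fun k _ => ?_
      rw [Matrix.mul_smul, Matrix.smul_mul]
    have hlast : lam (Fin.last m) • (Pᵀ * A (Fin.last m) * P) =
        1 - ∑ i : Fin m, lam i.castSucc • (Pᵀ * A i.castSucc * P) := by
      rw [← hBsum, Fin.sum_univ_castSucc]
      exact (add_sub_cancel_left _ _).symm
    have hcl : ∀ i, i ≠ Fin.last m →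
        (Pᵀ * A i * P) * (Pᵀ * A (Fin.last m) * P) =
          (Pᵀ * A (Fin.last m) * P) * (Pᵀ * A i * P) := by
      intro i hi
      have e1 : lam (Fin.last m) • ((Pᵀ * A i * P) * (Pᵀ * A (Fin.last m) * P)) =
          lam (Fin.last m) • ((Pᵀ * A (Fin.last m) * P) * (Pᵀ * A i * P)) := by
        calc lam (Fin.last m) • ((Pᵀ * A i * P) * (Pᵀ * A (Fin.last m) * P))
            = (Pᵀ * A i * P) * (lam (Fin.last m) • (Pᵀ * A (Fin.last m) * P)) := by
              rw [mul_smul_comm]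
          _ = (Pᵀ * A i * P) -
              ∑ c : Fin m, lam c.castSucc • ((Pᵀ * A i * P) * (Pᵀ * A c.castSucc * P)) := by
              rw [hlast, mul_sub, mul_one, Finset.mul_sum]
              congr 1
              exact Finset.sum_congr rfl fun c _ => (mul_smul_comm _ _ _)
          _ = (Pᵀ * A i * P) -
              ∑ c : Fin m, lam c.castSucc • ((Pᵀ * A c.castSucc * P) * (Pᵀ * A i * P)) := by
              congr 1
              exact Finset.sum_congr rfl fun c _ => by
                rw [h i c.castSucc hi (Fin.castSucc_lt_last c).ne]
          _ = (1 - ∑ c : Fin m, lam c.castSucc • (Pᵀ * A c.castSucc * P)) * (Pᵀ * A i * P) := by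
              rw [sub_mul, one_mul, Finset.sum_mul]
              congr 1
              exact Finset.sum_congr rfl fun c _ => (smul_mul_assoc _ _ _).symm
          _ = lam (Fin.last m) • ((Pᵀ * A (Fin.last m) * P) * (Pᵀ * A i * P)) := by
              rw [← hlast, smul_mul_assoc]
      exact smul_right_injective (Matrix (Fin n) (Fin n) ℝ) hlamm e1
    have hcomm : ∀ i j, (Pᵀ * A i * P) * (Pᵀ * A j * P) = (Pᵀ * A j * P) * (Pᵀ * A i * P) := by
      intro i j
      by_cases hi : i = Fin.last m
      · by_cases hj : j = Fin.last m
        · rw [hi, hj]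
        · rw [hi]; exact (hcl j hj).symm
      · by_cases hj : j = Fin.last m
        · rw [hj]; exact hcl i hi
        · exact h i j hi hj
    have hBH : ∀ i, (Pᵀ * A i * P).IsHermitian := by
      intro i
      have ht : (Pᵀ * A i * P)ᵀ = Pᵀ * A i * P := by
        simp [Matrix.transpose_mul, (hA i).eq, Matrix.mul_assoc]
      rw [Matrix.IsHermitian, Matrix.conjTranspose_eq_transpose_of_trivial]
      exact ht
    obtain ⟨S, hS1, hSdiag⟩ := simul_diag (fun i => Pᵀ * A i * P) hBH hcomm
    have hSU : IsUnit S := by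
      haveI : Invertible S := invertibleOfLeftInverse S Sᵀ hS1
      exact isUnit_of_invertible S
    refine ⟨P * S, hP.mul hSU, fun i => ?_⟩
    have : (P * S)ᵀ * A i * (P * S) = Sᵀ * (Pᵀ * A i * P) * S := by
      rw [Matrix.transpose_mul]
      simp only [Matrix.mul_assoc]
    rw [this]
    exact hSdiag i
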